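/- Let k ≥ 2 and let φ : U → V be a C¹ diffeomorphism between open subsets of ℝⁿ. Suppose that for some x ∈ U and some polynomial P of degree ≤ k-1, limsup_{h→0} |φ(x+h) - P(h)|/|h|^k < ∞. Then there exists a polynomial Q of degree ≤ k-1 such that limsup_{h→0} |φ⁻¹(y+h) - Q(h)|/|h|^k < ∞, where y = φ(x). -/

import Mathlib

open MeasureTheory Asymptotics Filter

noncomputable def polyEval {n m : ℕ} (P : Fin m → MvPolynomial (Fin n) ℝ)
    (x : Fin n → ℝ) : Fin m → ℝ :=
  fun i => MvPolynomial.eval x (P i)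

namespace InvBigO

open MvPolynomial Finsupp

variable {n : ℕ}

abbrev Poly (n : ℕ) := MvPolynomial (Fin n) ℝ

lemma degree_add (a b : Fin n →₀ ℕ) : (a + b).degree = a.degree + b.degree := by
  simp only [Finsupp.degree_eq_weight_one, map_add]

/-- all monomials of `p` have degree ≥ m -/
def Vge (m : ℕ) (p : Poly n) : Prop := ∀ d : Fin n →₀ ℕ, d.degree < m → coeff d p = 0

lemma Vge.zero (m : ℕ) : Vge m (0 : Poly n) := fun _ _ => rfl

lemma Vge.mono {m m' : ℕ} {p : Poly n} (h : m' ≤ m) (hp : Vge m p) : Vge m' p :=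
  fun d hd => hp d (lt_of_lt_of_le hd h)

lemma Vge.add {m : ℕ} {p q : Poly n} (hp : Vge m p) (hq : Vge m q) : Vge m (p + q) := by
  intro d hd; simp [coeff_add, hp d hd, hq d hd]

lemma Vge.neg {m : ℕ} {p : Poly n} (hp : Vge m p) : Vge m (-p) := by
  intro d hd; simp [hp d hd]

lemma Vge.sub {m : ℕ} {p q : Poly n} (hp : Vge m p) (hq : Vge m q) : Vge m (p - q) := by
  simpa [sub_eq_add_neg] using hp.add hq.neg

lemma Vge.sum {m : ℕ} {ι : Type*} {s : Finset ι} {f : ι → Poly n}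
    (h : ∀ i ∈ s, Vge m (f i)) : Vge m (∑ i ∈ s, f i) := by
  classical
  induction s using Finset.induction_on with
  | empty => simpa using Vge.zero m
  | @insert a s hx ih =>
    rw [Finset.sum_insert hx]
    exact (h a (Finset.mem_insert_self a s)).add
      (ih fun i hi => h i (Finset.mem_insert_of_mem hi))

lemma Vge.mul {a b : ℕ} {p q : Poly n} (hp : Vge a p) (hq : Vge b q) :
    Vge (a + b) (p * q) := by
  intro d hd
  rw [coeff_mul]
  apply Finset.sum_eq_zero
  rintro ⟨d₁, d₂⟩ hmem
  rw [Finset.HasAntidiagonal.mem_antidiagonal] at hmem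
  have hdd : d₁.degree + d₂.degree < a + b := by
    rw [← degree_add, hmem]; exact hd
  rcases lt_or_ge d₁.degree a with h1 | h1
  · simp [hp d₁ h1]
  · have : d₂.degree < b := by omega
    simp [hq d₂ this]

lemma Vge.pow {a : ℕ} {p : Poly n} (hp : Vge a p) (e : ℕ) : Vge (e * a) (p ^ e) := by
  induction e with
  | zero => intro d hd; simp at hd
  | succ e ih =>
    have := ih.mul hp
    rw [pow_succ]
    have he : (e + 1) * a = e * a + a := by ring
    rw [he]
    exact this

lemma Vge.C_mul {m : ℕ} {p : Poly n} (c : ℝ) (hp : Vge m p) : Vge m (C c * p) := by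
  have := (show Vge 0 (C c : Poly n) from fun d hd => by omega).mul hp
  simpa using this

lemma Vge.prod {ι : Type*} {s : Finset ι} {f : ι → Poly n} {a : ι → ℕ}
    (h : ∀ i ∈ s, Vge (a i) (f i)) : Vge (∑ i ∈ s, a i) (∏ i ∈ s, f i) := by
  classical
  induction s using Finset.induction_on with
  | empty =>
    intro d hd
    simp only [Finset.sum_empty] at hd; omega
  | @insert j s hx ih =>
    rw [Finset.sum_insert hx, Finset.prod_insert hx]
    exact (h j (Finset.mem_insert_self j s)).mul
      (ih fun i hi => h i (Finset.mem_insert_of_mem hi))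

lemma degree_finsuppSum (d : Fin n →₀ ℕ) : (d.sum fun _ e => e) = d.degree := rfl

lemma Vge_monomial {d : Fin n →₀ ℕ} {c : ℝ} {m : ℕ} (h : m ≤ d.degree) :
    Vge m (monomial d c : Poly n) := by
  intro d' hd'
  rw [coeff_monomial]
  split
  · subst ‹d = d'›; omega
  · rfl

/-- substitution into a polynomial of valuation ≥ m, with substituted polys of valuation ≥ 1 -/
lemma Vge.bind₁ {m : ℕ} {R : Fin n → Poly n} (hR : ∀ j, Vge 1 (R j)) {p : Poly n}
    (hp : Vge m p) : Vge m (MvPolynomial.bind₁ R p) := by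
  classical
  rw [p.as_sum, map_sum]
  apply Vge.sum
  intro d hd
  rw [bind₁_monomial]
  apply Vge.C_mul
  have : Vge (∑ j ∈ d.support, d j * 1) (∏ j ∈ d.support, R j ^ d j) :=
    Vge.prod fun j _ => (hR j).pow (d j)
  simp only [mul_one] at this
  have hdm : m ≤ d.degree := by
    by_contra hc
    exact absurd (hp d (by omega)) (MvPolynomial.mem_support_iff.mp hd)
  exact this.mono hdm


/-- telescoping for powers -/
lemma Vge.pow_sub_pow {t : ℕ} (ht : 1 ≤ t) {f g : Poly n} (hf : Vge 1 f) (hg : Vge 1 g)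
    (hfg : Vge t (f - g)) : ∀ e : ℕ, Vge (t + e - 1) (f ^ e - g ^ e) := by
  intro e
  induction e with
  | zero => simpa using Vge.zero _
  | succ e ih =>
    have key : f ^ (e + 1) - g ^ (e + 1) = f * (f ^ e - g ^ e) + (f - g) * g ^ e := by ring
    rw [key]
    have h1 : Vge (1 + (t + e - 1)) (f * (f ^ e - g ^ e)) := hf.mul ih
    have h2 : Vge (t + e * 1) ((f - g) * g ^ e) := hfg.mul (hg.pow e)
    exact (h1.mono (by omega)).add (h2.mono (by omega))

/-- telescoping for products of powers -/
lemma Vge.prod_pow_sub {t : ℕ} (ht : 1 ≤ t) {s : Finset (Fin n)} {f g : Fin n → Poly n}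
    (hf : ∀ j, Vge 1 (f j)) (hg : ∀ j, Vge 1 (g j)) (hfg : ∀ j, Vge t (f j - g j))
    (e : Fin n → ℕ) :
    Vge (t + (∑ j ∈ s, e j) - 1) (∏ j ∈ s, f j ^ e j - ∏ j ∈ s, g j ^ e j) := by
  classical
  induction s using Finset.induction_on with
  | empty => simpa using Vge.zero _
  | @insert j s hx ih =>
    rw [Finset.prod_insert hx, Finset.prod_insert hx, Finset.sum_insert hx]
    have key : f j ^ e j * ∏ i ∈ s, f i ^ e i - g j ^ e j * ∏ i ∈ s, g i ^ e i
        = f j ^ e j * (∏ i ∈ s, f i ^ e i - ∏ i ∈ s, g i ^ e i)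
          + (f j ^ e j - g j ^ e j) * ∏ i ∈ s, g i ^ e i := by ring
    rw [key]
    have h1 := ((hf j).pow (e j)).mul ih
    have h2 := (Vge.pow_sub_pow ht (hf j) (hg j) (hfg j) (e j)).mul
      (Vge.prod (s := s) (f := fun i => g i ^ e i) (a := fun i => e i * 1)
        fun i _ => (hg i).pow (e i))
    simp only [mul_one] at h2
    refine (h1.mono ?_).add (h2.mono ?_) <;> omega

/-- difference of substitutions -/
lemma Vge.bind₁_sub {t a : ℕ} (ht : 1 ≤ t) {R' R : Fin n → Poly n}
    (hR' : ∀ j, Vge 1 (R' j)) (hR : ∀ j, Vge 1 (R j)) (hd : ∀ j, Vge t (R' j - R j))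
    {p : Poly n} (hp : Vge a p) :
    Vge (t + a - 1) (MvPolynomial.bind₁ R' p - MvPolynomial.bind₁ R p) := by
  classical
  rw [p.as_sum, map_sum, map_sum, ← Finset.sum_sub_distrib]
  apply Vge.sum
  intro d hdsup
  rw [bind₁_monomial, bind₁_monomial, ← mul_sub]
  apply Vge.C_mul
  have hdm : a ≤ d.degree := by
    by_contra hc
    exact absurd (hp d (by omega)) (MvPolynomial.mem_support_iff.mp hdsup)
  have := Vge.prod_pow_sub ht (s := d.support) hR' hR hd (fun i => d i)
  exact this.mono (by
    have : d.degree = ∑ j ∈ d.support, d j := rfl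
    omega)


lemma degree_single_one (j : Fin n) : (Finsupp.single j 1 : Fin n →₀ ℕ).degree = 1 := by
  simp [Finsupp.degree_apply, Finsupp.support_single_ne_zero j one_ne_zero]

lemma eq_single_of_degree_one {d : Fin n →₀ ℕ} (h : d.degree = 1) :
    ∃ j, d = Finsupp.single j 1 := by
  classical
  have hpos : ∀ i ∈ d.support, 1 ≤ d i := fun i hi =>
    Nat.one_le_iff_ne_zero.2 (Finsupp.mem_support_iff.1 hi)
  have hcard : d.support.card ≤ 1 := by
    have := Finset.card_nsmul_le_sum d.support d 1 hpos
    simpa [Finsupp.degree] using this.trans_eq h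
  have hne : d.support.Nonempty := by
    rcases Finset.eq_empty_or_nonempty d.support with he | hne
    · exfalso; rw [Finsupp.degree_apply, he] at h; simp at h
    · exact hne
  obtain ⟨j, hj⟩ := Finset.card_eq_one.1 (le_antisymm hcard (Finset.card_pos.2 hne))
  have hdj : d j = 1 := by
    have := h; rw [Finsupp.degree_apply, hj] at this; simpa using this
  refine ⟨j, ?_⟩
  ext i
  by_cases hij : i = j
  · subst hij; simp [hdj]
  · have : i ∉ d.support := by rw [hj]; simp [hij]
    simp [Finsupp.notMem_support_iff.1 this, Finsupp.single_apply, Ne.symm hij, hij]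

noncomputable def linP (M : Matrix (Fin n) (Fin n) ℝ) : Fin n → Poly n := fun i => ∑ j, C (M i j) * X j

lemma Vge_linP (M : Matrix (Fin n) (Fin n) ℝ) (i : Fin n) : Vge 1 (linP M i) := by
  apply Vge.sum
  intro j _
  rw [C_mul_X_eq_monomial]
  exact Vge_monomial (by rw [degree_single_one])

lemma coeff_single_linP (M : Matrix (Fin n) (Fin n) ℝ) (i j : Fin n) :
    coeff (Finsupp.single j 1) (linP M i) = M i j := by
  classical
  unfold linP
  rw [MvPolynomial.coeff_sum]
  have : ∀ l : Fin n, coeff (Finsupp.single j 1) (C (M i l) * X l : Poly n)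
      = if l = j then M i l else 0 := by
    intro l
    rw [C_mul_X_eq_monomial, coeff_monomial]
    by_cases h : l = j
    · subst h; simp
    · rw [if_neg h, if_neg]
      intro hc
      exact h (Finsupp.single_left_injective one_ne_zero hc)
  simp_rw [this]
  simp

lemma coeff_zero_linP (M : Matrix (Fin n) (Fin n) ℝ) (i : Fin n) :
    coeff 0 (linP M i) = 0 := by
  have := Vge_linP M i 0 (by simp [map_zero])
  exact this

lemma eval_linP (M : Matrix (Fin n) (Fin n) ℝ) (h : Fin n → ℝ) (i : Fin n) :
    MvPolynomial.eval h (linP M i) = M.mulVec h i := by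
  simp [linP, Matrix.mulVec, dotProduct]

lemma bind₁_linP (R : Fin n → Poly n) (M : Matrix (Fin n) (Fin n) ℝ) (i : Fin n) :
    MvPolynomial.bind₁ R (linP M i) = ∑ j, C (M i j) * R j := by
  simp [linP]

/-- the "defect" of a candidate inverse substitution R -/
noncomputable def delta (Pp : Fin n → Poly n) (yv : Fin n → ℝ) (R : Fin n → Poly n) : Fin n → Poly n :=
  fun i => MvPolynomial.bind₁ R (Pp i) - C (yv i) - X i

lemma delta_decomp (Pp : Fin n → Poly n) (yv : Fin n → ℝ) (A : Matrix (Fin n) (Fin n) ℝ)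
    (R : Fin n → Poly n) (i : Fin n) :
    delta Pp yv R i = MvPolynomial.bind₁ R (linP A i)
      + MvPolynomial.bind₁ R (Pp i - C (yv i) - linP A i) - X i := by
  simp only [delta, map_sub, bind₁_C_right]
  ring

lemma sum_C_mul_delta (A B : Matrix (Fin n) (Fin n) ℝ) (hAB : A * B = 1)
    (δ : Fin n → Poly n) (i : Fin n) :
    ∑ j, C (A i j) * ∑ l, C (B j l) * δ l = δ i := by
  classical
  have h1 : ∀ j, C (A i j) * ∑ l, C (B j l) * δ l = ∑ l, C (A i j * B j l) * δ l := by
    intro j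
    rw [Finset.mul_sum]
    refine Finset.sum_congr rfl fun l _ => ?_
    rw [← mul_assoc, ← C_mul]
  simp_rw [h1]
  rw [Finset.sum_comm]
  have h2 : ∀ l, ∑ j, C (A i j * B j l) * δ l = C ((A * B) i l) * δ l := by
    intro l
    rw [← Finset.sum_mul, ← map_sum]
    rw [Matrix.mul_apply]
  simp_rw [h2, hAB, Matrix.one_apply]
  rw [Finset.sum_eq_single i]
  · simp
  · intro b _ hb; simp [Ne.symm hb]
  · intro hc; exact absurd (Finset.mem_univ i) hc


lemma step_lemma (Pp : Fin n → Poly n) (yv : Fin n → ℝ) (A B : Matrix (Fin n) (Fin n) ℝ)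
    (hAB : A * B = 1) (hE : ∀ i, Vge 2 (Pp i - C (yv i) - linP A i))
    (R : Fin n → Poly n) (hR : ∀ j, Vge 1 (R j)) (m : ℕ)
    (hδ : ∀ i, Vge (m + 2) (delta Pp yv R i)) :
    (∀ j, Vge 1 ((fun j => R j - ∑ i, C (B j i) * delta Pp yv R i) j)) ∧
    (∀ i, Vge (m + 3) (delta Pp yv (fun j => R j - ∑ i, C (B j i) * delta Pp yv R i) i)) := by
  set E : Fin n → Poly n := fun i => Pp i - C (yv i) - linP A i with hEdef
  set δ : Fin n → Poly n := delta Pp yv R with hδdef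
  set R' : Fin n → Poly n := fun j => R j - ∑ i, C (B j i) * δ i with hR'def
  have hR'1 : ∀ j, Vge 1 (R' j) := fun j =>
    (hR j).sub (Vge.sum fun i _ => Vge.C_mul _ ((hδ i).mono (by omega)))
  refine ⟨hR'1, fun i => ?_⟩
  have hdiff : ∀ j, Vge (m + 2) (R' j - R j) := by
    intro j
    have he : R' j - R j = -(∑ i, C (B j i) * δ i) := by rw [hR'def]; ring
    rw [he]
    exact (Vge.sum fun i _ => Vge.C_mul _ (hδ i)).neg
  have key : delta Pp yv R' i
      = MvPolynomial.bind₁ R' (E i) - MvPolynomial.bind₁ R (E i) := by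
    rw [delta_decomp Pp yv A R' i]
    have h1 : MvPolynomial.bind₁ R' (linP A i) = MvPolynomial.bind₁ R (linP A i) - δ i := by
      rw [bind₁_linP, bind₁_linP]
      have hj : ∀ j, R' j = R j - ∑ l, C (B j l) * δ l := fun j => rfl
      simp_rw [hj, mul_sub, Finset.sum_sub_distrib]
      rw [sum_C_mul_delta A B hAB δ i]
    have h2 : δ i = MvPolynomial.bind₁ R (linP A i) + MvPolynomial.bind₁ R (E i) - X i := by
      rw [hδdef]; exact delta_decomp Pp yv A R i
    rw [h1, h2]
    ring
  rw [key]
  have := Vge.bind₁_sub (t := m + 2) (a := 2) (by omega) hR'1 hR hdiff (hE i)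
  exact this.mono (by omega)

lemma base_lemma (Pp : Fin n → Poly n) (yv : Fin n → ℝ) (A B : Matrix (Fin n) (Fin n) ℝ)
    (hAB : A * B = 1) (hE : ∀ i, Vge 2 (Pp i - C (yv i) - linP A i)) :
    (∀ j, Vge 1 (linP B j)) ∧ (∀ i, Vge 2 (delta Pp yv (linP B) i)) := by
  refine ⟨Vge_linP B, fun i => ?_⟩
  have key : delta Pp yv (linP B) i
      = MvPolynomial.bind₁ (linP B) (Pp i - C (yv i) - linP A i) := by
    rw [delta_decomp Pp yv A (linP B) i]
    have h1 : MvPolynomial.bind₁ (linP B) (linP A i) = X i := by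
      rw [bind₁_linP]
      have hj : ∀ j, linP B j = ∑ l, C (B j l) * X l := fun j => rfl
      simp_rw [hj]
      exact sum_C_mul_delta A B hAB X i
    rw [h1]
    ring
  rw [key]
  exact (hE i).bind₁ (Vge_linP B)

lemma exists_good_R (Pp : Fin n → Poly n) (yv : Fin n → ℝ) (A B : Matrix (Fin n) (Fin n) ℝ)
    (hAB : A * B = 1) (hE : ∀ i, Vge 2 (Pp i - C (yv i) - linP A i)) (k : ℕ) (hk : 2 ≤ k) :
    ∃ R : Fin n → Poly n, (∀ j, Vge 1 (R j)) ∧ ∀ i, Vge k (delta Pp yv R i) := by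
  suffices H : ∀ s : ℕ, ∃ R : Fin n → Poly n,
      (∀ j, Vge 1 (R j)) ∧ ∀ i, Vge (s + 2) (delta Pp yv R i) by
    obtain ⟨R, h1, h2⟩ := H (k - 2)
    exact ⟨R, h1, fun i => (h2 i).mono (by omega)⟩
  intro s
  induction s with
  | zero => exact ⟨linP B, base_lemma Pp yv A B hAB hE⟩
  | succ s ih =>
    obtain ⟨R, h1, h2⟩ := ih
    obtain ⟨h1', h2'⟩ := step_lemma Pp yv A B hAB hE R h1 s h2
    exact ⟨_, h1', fun i => (h2' i).mono (by omega)⟩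

noncomputable def truncP (k : ℕ) (p : Poly n) : Poly n :=
  ∑ j ∈ Finset.range k, homogeneousComponent j p

lemma coeff_truncP (k : ℕ) (p : Poly n) (d : Fin n →₀ ℕ) :
    coeff d (truncP k p) = if d.degree < k then coeff d p else 0 := by
  unfold truncP
  rw [MvPolynomial.coeff_sum]
  simp_rw [coeff_homogeneousComponent]
  simp [Finset.sum_ite_eq, Finset.mem_range]

lemma Vge_one_truncP {k : ℕ} {p : Poly n} (hp : Vge 1 p) : Vge 1 (truncP k p) := by
  intro d hd
  rw [coeff_truncP]
  split
  · exact hp d hd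
  · rfl

lemma Vge_sub_truncP (k : ℕ) (p : Poly n) : Vge k (p - truncP k p) := by
  intro d hd
  rw [coeff_sub, coeff_truncP, if_pos hd, sub_self]

lemma totalDegree_truncP (k : ℕ) (hk : 1 ≤ k) (p : Poly n) :
    (truncP k p).totalDegree ≤ k - 1 := by
  unfold truncP
  refine (totalDegree_finset_sum _ _).trans (Finset.sup_le fun j hj => ?_)
  have := (homogeneousComponent_isHomogeneous (n := j) (φ := p)).totalDegree_le
  refine this.trans ?_
  have := Finset.mem_range.1 hj
  omega


open Asymptotics Filter in
lemma isBigO_eval_of_Vge {m : ℕ} {p : Poly n} (hp : Vge m p) :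
    (fun h : Fin n → ℝ => MvPolynomial.eval h p) =O[nhds 0] fun h => ‖h‖ ^ m := by
  classical
  have heq : (fun h : Fin n → ℝ => MvPolynomial.eval h p)
      = fun h => ∑ d ∈ p.support, coeff d p * ∏ i ∈ d.support, h i ^ d i := by
    funext h
    rw [MvPolynomial.eval_eq]
  rw [heq]
  apply Asymptotics.IsBigO.fun_sum
  intro d hd
  have hdm : m ≤ d.degree := by
    by_contra hc
    exact absurd (hp d (by omega)) (MvPolynomial.mem_support_iff.mp hd)
  refine Asymptotics.IsBigO.of_bound |coeff d p| ?_
  filter_upwards [Metric.ball_mem_nhds (0 : Fin n → ℝ) one_pos] with h hh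
  rw [mem_ball_zero_iff] at hh
  have h0 : (0:ℝ) ≤ ‖h‖ := norm_nonneg h
  have hb : ∀ i : Fin n, |h i| ≤ ‖h‖ := fun i => by
    simpa using norm_le_pi_norm h i
  calc ‖coeff d p * ∏ i ∈ d.support, h i ^ d i‖
      = |coeff d p| * ∏ i ∈ d.support, |h i| ^ d i := by
        rw [Real.norm_eq_abs, abs_mul, Finset.abs_prod]
        simp [abs_pow]
    _ ≤ |coeff d p| * ∏ i ∈ d.support, ‖h‖ ^ d i := by
        apply mul_le_mul_of_nonneg_left _ (abs_nonneg _)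
        apply Finset.prod_le_prod
        · intro i _; positivity
        · intro i _; exact pow_le_pow_left₀ (abs_nonneg _) (hb i) _
    _ = |coeff d p| * ‖h‖ ^ d.degree := by
        rw [Finset.prod_pow_eq_pow_sum]
        rfl
    _ ≤ |coeff d p| * ‖h‖ ^ m := by
        apply mul_le_mul_of_nonneg_left _ (abs_nonneg _)
        exact pow_le_pow_of_le_one h0 hh.le hdm
    _ = |coeff d p| * ‖(‖h‖ ^ m)‖ := by
        rw [Real.norm_eq_abs, abs_of_nonneg (pow_nonneg h0 m)]


lemma eval_bind₁' (f : Fin n → ℝ) (g : Fin n → Poly n) (p : Poly n) :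
    MvPolynomial.eval f (MvPolynomial.bind₁ g p)
      = MvPolynomial.eval (fun i => MvPolynomial.eval f (g i)) p := by
  have h1 := aeval_bind₁ (R := ℝ) (S := ℝ) f g p
  have h2 : ∀ (q : Poly n), aeval (R := ℝ) f q = MvPolynomial.eval f q := fun q =>
    RingHom.congr_fun (coe_aeval_eq_eval (f := f)) q
  have h3 : ∀ (q : Poly n), aeval (R := ℝ) (fun i => aeval (R := ℝ) f (g i)) q
      = MvPolynomial.eval (fun i => MvPolynomial.eval f (g i)) q := by
    intro q
    rw [show (fun i => aeval (R := ℝ) f (g i)) = fun i => MvPolynomial.eval f (g i) from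
      funext fun i => h2 (g i)]
    exact RingHom.congr_fun (coe_aeval_eq_eval (f := _)) q
  rw [← h2, ← h3 p, h1]

end InvBigO

open InvBigO MvPolynomial

theorem inverse_has_bigO_expansion
    (n k : ℕ) (hk : 2 ≤ k) (U V : Set (Fin n → ℝ)) (hU : IsOpen U) (hV : IsOpen V)
    (φ ψ : (Fin n → ℝ) → (Fin n → ℝ))
    (hφU : Set.MapsTo φ U V) (hψV : Set.MapsTo ψ V U)
    (hleft : ∀ x ∈ U, ψ (φ x) = x) (hright : ∀ y ∈ V, φ (ψ y) = y)
    (hφ : ContDiffOn ℝ 1 φ U) (hψ : ContDiffOn ℝ 1 ψ V)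
    (x : Fin n → ℝ) (hx : x ∈ U)
    (P : Fin n → MvPolynomial (Fin n) ℝ) (hPdeg : ∀ i, (P i).totalDegree ≤ k - 1)
    (hP : (fun h => φ (x + h) - polyEval P h) =O[nhds 0] fun h => ‖h‖ ^ k) :
    ∃ Q : Fin n → MvPolynomial (Fin n) ℝ, (∀ i, (Q i).totalDegree ≤ k - 1) ∧
      (fun h => ψ (φ x + h) - polyEval Q h) =O[nhds 0] fun h => ‖h‖ ^ k := by
  classical
  set y := φ x with hy
  have hyV : y ∈ V := hφU hx
  have hφc : ContinuousAt φ x := hφ.continuousOn.continuousAt (hU.mem_nhds hx)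
  have hψca : ContDiffAt ℝ 1 ψ y := hψ.contDiffAt (hV.mem_nhds hyV)
  have hψdiff : DifferentiableAt ℝ ψ y := hψca.differentiableAt one_ne_zero
  -- continuity of polynomial evaluation
  have hPc : Continuous fun h : Fin n → ℝ => polyEval P h :=
    continuous_pi fun i => MvPolynomial.continuous_eval (P i)
  -- constant term of P is y
  have hP0 : polyEval P 0 = y := by
    have htend : Tendsto (fun h : Fin n → ℝ => φ (x + h) - polyEval P h) (nhds 0)
        (nhds (φ x - polyEval P 0)) := by
      apply Tendsto.sub
      · have h1 : Tendsto (fun h : Fin n → ℝ => x + h) (nhds 0) (nhds x) := by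
          simpa using (continuous_add_left x).tendsto (0 : Fin n → ℝ)
        exact hφc.tendsto.comp h1
      · simpa using hPc.tendsto (0 : Fin n → ℝ)
    have hzero : Tendsto (fun h : Fin n → ℝ => ‖h‖ ^ k) (nhds 0) (nhds 0) := by
      have h1 : Tendsto (fun h : Fin n → ℝ => ‖h‖) (nhds 0) (nhds 0) := by
        simpa using tendsto_norm_zero
      simpa [zero_pow (show k ≠ 0 by omega)] using h1.pow k
    have := tendsto_nhds_unique htend (hP.trans_tendsto hzero)
    have := sub_eq_zero.mp this
    exact this.symm ▸ rfl
  have hP0' : ∀ i, coeff 0 (P i) = y i := by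
    intro i
    have : polyEval P 0 i = y i := by rw [hP0]
    rw [← this]
    show coeff 0 (P i) = MvPolynomial.eval 0 (P i)
    rw [MvPolynomial.eval_zero]
    rfl
  -- the linear part
  set A : Matrix (Fin n) (Fin n) ℝ := fun i j => coeff (Finsupp.single j 1) (P i) with hA
  have hE : ∀ i, Vge 2 (P i - C (y i) - linP A i) := by
    intro i d hd
    rw [coeff_sub, coeff_sub]
    rcases (by omega : d.degree = 0 ∨ d.degree = 1) with h0 | h1
    · have hd0 : d = 0 := (Finsupp.degree_eq_zero_iff d).mp h0
      subst hd0
      rw [hP0' i, coeff_zero_linP, coeff_zero_C]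
      ring
    · obtain ⟨j, rfl⟩ := eq_single_of_degree_one h1
      rw [coeff_single_linP]
      have hC : coeff (Finsupp.single j 1) (C (y i) : Poly n) = 0 := by
        rw [coeff_C, if_neg]
        intro hc
        have := degree_single_one (n := n) j
        rw [← hc] at this
        simp at this
      rw [hC, hA]
      ring
  set Al := LinearMap.toContinuousLinearMap (Matrix.mulVecLin A) with hAl
  have hAd : HasFDerivAt φ Al x := by
    rw [hasFDerivAt_iff_isLittleO_nhds_zero]
    have hsplit : (fun h : Fin n → ℝ => φ (x + h) - φ x - Al h)
        = fun h => (φ (x + h) - polyEval P h)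
          + (fun i => MvPolynomial.eval h (P i - C (y i) - linP A i)) := by
      funext h
      funext i
      simp only [Pi.add_apply, Pi.sub_apply]
      have hAle : Al h i = A.mulVec h i := rfl
      rw [hAle]
      have : MvPolynomial.eval h (P i - C (y i) - linP A i)
          = MvPolynomial.eval h (P i) - y i - A.mulVec h i := by
        rw [map_sub, map_sub, eval_C, eval_linP]
      rw [this]
      show φ (x + h) i - y i - A.mulVec h i
        = φ (x + h) i - polyEval P h i + (MvPolynomial.eval h (P i) - y i - A.mulVec h i)
      have : polyEval P h i = MvPolynomial.eval h (P i) := rfl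
      rw [this]
      ring
    rw [hsplit]
    have h1 : (fun h : Fin n → ℝ => φ (x + h) - polyEval P h) =o[nhds 0] fun h => h :=
      hP.trans_isLittleO (isLittleO_norm_pow_id (by omega))
    have h2 : (fun h : Fin n → ℝ => fun i => MvPolynomial.eval h (P i - C (y i) - linP A i))
        =o[nhds 0] fun h => h := by
      have hO : (fun h : Fin n → ℝ => fun i => MvPolynomial.eval h (P i - C (y i) - linP A i))
          =O[nhds 0] fun h => ‖h‖ ^ 2 :=
        isBigO_pi.mpr fun i => isBigO_eval_of_Vge (hE i)
      exact hO.trans_isLittleO (isLittleO_norm_pow_id one_lt_two)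
    exact h1.add h2
  -- the derivative of ψ is a two-sided inverse of A
  set B : Matrix (Fin n) (Fin n) ℝ
    := LinearMap.toMatrix' (↑(fderiv ℝ ψ y) : (Fin n → ℝ) →ₗ[ℝ] (Fin n → ℝ)) with hB
  have hBA : B * A = 1 := by
    have hcomp : HasFDerivAt (ψ ∘ φ) ((fderiv ℝ ψ y).comp Al) x :=
      hψdiff.hasFDerivAt.comp x hAd
    have hev : ψ ∘ φ =ᶠ[nhds x] id := by
      filter_upwards [hU.mem_nhds hx] with z hz
      exact hleft z hz
    have hid : HasFDerivAt (ψ ∘ φ) (ContinuousLinearMap.id ℝ (Fin n → ℝ)) x :=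
      (hasFDerivAt_id x).congr_of_eventuallyEq hev
    have huniq : (fderiv ℝ ψ y).comp Al = ContinuousLinearMap.id ℝ (Fin n → ℝ) :=
      hcomp.unique hid
    have hlin : (↑(fderiv ℝ ψ y) : (Fin n → ℝ) →ₗ[ℝ] (Fin n → ℝ)).comp
        (Matrix.mulVecLin A) = LinearMap.id := by
      have := congrArg (fun (f : (Fin n → ℝ) →L[ℝ] (Fin n → ℝ)) =>
        (↑f : (Fin n → ℝ) →ₗ[ℝ] (Fin n → ℝ))) huniq
      simpa [hAl] using this
    calc B * A = LinearMap.toMatrix' ((↑(fderiv ℝ ψ y) : (Fin n → ℝ) →ₗ[ℝ] _).comp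
          (Matrix.mulVecLin A)) := by
          rw [LinearMap.toMatrix'_comp, hB, ← Matrix.toLin'_apply', LinearMap.toMatrix'_toLin']
      _ = 1 := by rw [hlin, LinearMap.toMatrix'_id]
  have hAB : A * B = 1 := mul_eq_one_comm.mpr hBA
  obtain ⟨R, hR1, hδR⟩ := exists_good_R P y A B hAB hE k hk
  set T : Fin n → Poly n := fun j => truncP k (R j) with hT
  have hT1 : ∀ j, Vge 1 (T j) := fun j => Vge_one_truncP (hR1 j)
  have hTR : ∀ j, Vge k (T j - R j) := by
    intro j
    have := (Vge_sub_truncP k (R j)).neg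
    simpa [hT, neg_sub] using this
  have hδT : ∀ i, Vge k (delta P y T i) := by
    intro i
    have hP1 : Vge 1 (P i - C (y i)) := by
      intro d hd
      have hd0 : d = 0 := (Finsupp.degree_eq_zero_iff d).mp (by omega)
      subst hd0
      rw [coeff_sub, hP0' i, coeff_zero_C, sub_self]
    have hdiff := Vge.bind₁_sub (t := k) (a := 1) (by omega) hT1 hR1 hTR hP1
    have hkk : k + 1 - 1 = k := by omega
    rw [hkk] at hdiff
    have hiden : delta P y T i = delta P y R i
        + ((MvPolynomial.bind₁ T) (P i - C (y i)) - (MvPolynomial.bind₁ R) (P i - C (y i))) := by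
      simp only [delta, map_sub, bind₁_C_right]
      ring
    rw [hiden]
    exact (hδR i).add hdiff
  refine ⟨fun i => C (x i) + T i, ?_, ?_⟩
  · intro i
    refine (totalDegree_add _ _).trans (max_le ?_ ?_)
    · rw [totalDegree_C]; omega
    · exact totalDegree_truncP k (by omega) (R i)
  · set u : (Fin n → ℝ) → (Fin n → ℝ) := fun h => fun j => MvPolynomial.eval h (T j) with hu
    have huO1 : u =O[nhds 0] fun h => ‖h‖ := by
      have := isBigO_pi.mpr fun j => isBigO_eval_of_Vge (hT1 j)
      simpa using this
    have hut : Tendsto u (nhds 0) (nhds 0) :=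
      huO1.trans_tendsto (by simpa using tendsto_norm_zero (E := Fin n → ℝ))
    have hδO : (fun h => polyEval P (u h) - y - h) =O[nhds 0] fun h => ‖h‖ ^ k := by
      apply isBigO_pi.mpr
      intro i
      have hbase := isBigO_eval_of_Vge (hδT i)
      refine hbase.congr_left fun h => ?_
      simp only [delta, map_sub, eval_C, eval_X]
      rw [eval_bind₁']
      rfl
    have hφO : (fun h => φ (x + u h) - polyEval P (u h)) =O[nhds 0] fun h => ‖h‖ ^ k := by
      have hcomp := hP.comp_tendsto hut
      exact hcomp.trans ((huO1.norm_left.pow k))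
    have hsum : (fun h => φ (x + u h) - y - h) =O[nhds 0] fun h => ‖h‖ ^ k := by
      refine (hφO.add hδO).congr_left fun h => ?_
      abel
    obtain ⟨K, t, htmem, hlip⟩ := hψca.exists_lipschitzOnWith
    have htendxu : Tendsto (fun h => x + u h) (nhds 0) (nhds x) := by
      have := (tendsto_const_nhds (x := x) (f := nhds (0 : Fin n → ℝ))).add hut
      simpa using this
    have hev1 : ∀ᶠ h in nhds 0, x + u h ∈ U := htendxu.eventually_mem (hU.mem_nhds hx)
    have htendφ : Tendsto (fun h => φ (x + u h)) (nhds 0) (nhds y) := hφc.tendsto.comp htendxu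
    have hev2 : ∀ᶠ h in nhds 0, φ (x + u h) ∈ t := htendφ.eventually_mem htmem
    have hev3 : ∀ᶠ h in nhds 0, y + h ∈ t := by
      have htendy : Tendsto (fun h : Fin n → ℝ => y + h) (nhds 0) (nhds y) := by
        have := (tendsto_const_nhds (x := y) (f := nhds (0 : Fin n → ℝ))).add tendsto_id
        simpa using this
      exact htendy.eventually_mem htmem
    have hQeval : (fun h => ψ (φ x + h) - polyEval (fun i => C (x i) + T i) h)
        = fun h => ψ (y + h) - (x + u h) := by
      funext h
      funext i
      simp only [Pi.sub_apply, Pi.add_apply, ← hy]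
      congr 1
      show MvPolynomial.eval h (C (x i) + T i) = x i + u h i
      rw [map_add, eval_C]
    rw [hQeval]
    refine (Asymptotics.isBigO_iff.mpr ⟨K, ?_⟩).trans hsum
    filter_upwards [hev1, hev2, hev3] with h h1 h2 h3
    have hrw : ψ (y + h) - (x + u h) = ψ (y + h) - ψ (φ (x + u h)) := by
      rw [hleft _ h1]
    rw [hrw]
    calc ‖ψ (y + h) - ψ (φ (x + u h))‖
        = dist (ψ (y + h)) (ψ (φ (x + u h))) := (dist_eq_norm _ _).symm
      _ ≤ K * dist (y + h) (φ (x + u h)) := hlip.dist_le_mul _ h3 _ h2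
      _ = K * ‖φ (x + u h) - y - h‖ := by
          rw [dist_eq_norm, ← norm_neg]
          congr 1
          abel
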